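/- Let H be a complex Hilbert space, ψ ∈ H a unit vector, and A₀, A₁, B₀, B₁ : H →L[ℂ] H bounded self-adjoint operators satisfying Aᵢ ∘ Aᵢ = 1 and Bⱼ ∘ Bⱼ = 1, with Aᵢ ∘ Bⱼ = Bⱼ ∘ Aᵢ for all i, j ∈ {0,1}. Define the correlators c₁ = re⟪ψ, A₀B₀ψ⟫, c₂ = re⟪ψ, A₁B₀ψ⟫, c₃ = re⟪ψ, A₀B₁ψ⟫, c₄ = re⟪ψ, A₁B₁ψ⟫, and σᵢ = √(1 − cᵢ²). Then |c₁c₂ − c₃c₄| ≤ σ₁σ₂ + σ₃σ₄, |c₁c₃ − c₂c₄| ≤ σ₁σ₃ + σ₂σ₄, and |c₂c₃ − c₁c₄| ≤ σ₂σ₃ + σ₁σ₄. -/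

import Mathlib

lemma tlm_key {H : Type*} [NormedAddCommGroup H] [InnerProductSpace ℂ H]
    (a b p : H) (ha : ‖a‖ = 1) (hb : ‖b‖ = 1) (hp : ‖p‖ = 1) :
    |(inner ℂ a b : ℂ).re - (inner ℂ a p : ℂ).re * (inner ℂ b p : ℂ).re| ≤
      Real.sqrt (1 - (inner ℂ a p : ℂ).re ^ 2) * Real.sqrt (1 - (inner ℂ b p : ℂ).re ^ 2) := by
  set ca : ℝ := (inner ℂ a p : ℂ).re with hca
  set cb : ℝ := (inner ℂ b p : ℂ).re with hcb
  set a' : H := a - (ca : ℂ) • p with ha'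
  set b' : H := b - (cb : ℂ) • p with hb'
  have smul_re : ∀ (r : ℝ) (z : ℂ), ((r : ℂ) * z).re = r * z.re := by
    intro r z; simp [Complex.mul_re]
  have hpb : (inner ℂ p b : ℂ).re = cb := by
    rw [hcb]
    conv_lhs => rw [← inner_conj_symm]
    exact Complex.conj_re _
  have hpp : (inner ℂ p p : ℂ) = 1 := by
    rw [inner_self_eq_norm_sq_to_K, hp]; norm_num
  have h0 : (inner ℂ a' b' : ℂ) = inner ℂ a b - (cb : ℂ) * inner ℂ a p
      - (ca : ℂ) * inner ℂ p b + (ca : ℂ) * (cb : ℂ) := by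
    rw [ha', hb']
    simp only [inner_sub_left, inner_sub_right, inner_smul_left, inner_smul_right,
      Complex.conj_ofReal, hpp, mul_one]
    ring
  have hre : (inner ℂ a' b' : ℂ).re = (inner ℂ a b : ℂ).re - ca * cb := by
    rw [h0]
    simp only [Complex.add_re, Complex.sub_re, smul_re, hpb, Complex.ofReal_re, ← hca]
    ring
  have hsmul : ∀ (r : ℝ) (x : H), ‖x‖ = 1 → ‖(r : ℂ) • x‖ ^ 2 = r ^ 2 := by
    intro r x hx
    rw [norm_smul, hx, mul_one, Complex.norm_real, Real.norm_eq_abs, sq_abs]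
  have hna : ‖a'‖ ^ 2 = 1 - ca ^ 2 := by
    rw [ha', @norm_sub_sq ℂ, ha, inner_smul_right, hsmul ca p hp]
    simp only [RCLike.re_to_complex, smul_re, ← hca]
    ring
  have hnb : ‖b'‖ ^ 2 = 1 - cb ^ 2 := by
    rw [hb', @norm_sub_sq ℂ, hb, inner_smul_right, hsmul cb p hp]
    simp only [RCLike.re_to_complex, smul_re, ← hcb]
    ring
  have hsa : Real.sqrt (1 - ca ^ 2) = ‖a'‖ := by
    rw [← hna, Real.sqrt_sq (norm_nonneg _)]
  have hsb : Real.sqrt (1 - cb ^ 2) = ‖b'‖ := by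
    rw [← hnb, Real.sqrt_sq (norm_nonneg _)]
  rw [hsa, hsb, ← hre]
  calc |(inner ℂ a' b' : ℂ).re| ≤ ‖(inner ℂ a' b' : ℂ)‖ := Complex.abs_re_le_norm _
    _ ≤ ‖a'‖ * ‖b'‖ := norm_inner_le_norm _ _


lemma tlm_swap (c₁ c₂ c₃ c₄ : ℝ) (h1 : c₁ ^ 2 ≤ 1) (h2 : c₂ ^ 2 ≤ 1)
    (h3 : c₃ ^ 2 ≤ 1) (h4 : c₄ ^ 2 ≤ 1)
    (h : |c₁ * c₂ - c₃ * c₄| ≤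
      Real.sqrt (1 - c₁ ^ 2) * Real.sqrt (1 - c₂ ^ 2) +
      Real.sqrt (1 - c₃ ^ 2) * Real.sqrt (1 - c₄ ^ 2)) :
    |c₂ * c₃ - c₁ * c₄| ≤
      Real.sqrt (1 - c₂ ^ 2) * Real.sqrt (1 - c₃ ^ 2) +
      Real.sqrt (1 - c₁ ^ 2) * Real.sqrt (1 - c₄ ^ 2) := by
  set s₁ := Real.sqrt (1 - c₁ ^ 2) with hs₁
  set s₂ := Real.sqrt (1 - c₂ ^ 2) with hs₂
  set s₃ := Real.sqrt (1 - c₃ ^ 2) with hs₃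
  set s₄ := Real.sqrt (1 - c₄ ^ 2) with hs₄
  have n₁ : 0 ≤ s₁ := Real.sqrt_nonneg _
  have n₂ : 0 ≤ s₂ := Real.sqrt_nonneg _
  have n₃ : 0 ≤ s₃ := Real.sqrt_nonneg _
  have n₄ : 0 ≤ s₄ := Real.sqrt_nonneg _
  have e₁ : s₁ ^ 2 = 1 - c₁ ^ 2 := Real.sq_sqrt (by linarith)
  have e₂ : s₂ ^ 2 = 1 - c₂ ^ 2 := Real.sq_sqrt (by linarith)
  have e₃ : s₃ ^ 2 = 1 - c₃ ^ 2 := Real.sq_sqrt (by linarith)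
  have e₄ : s₄ ^ 2 = 1 - c₄ ^ 2 := Real.sq_sqrt (by linarith)
  have hsq : (c₁ * c₂ - c₃ * c₄) ^ 2 ≤ (s₁ * s₂ + s₃ * s₄) ^ 2 := by
    rw [← sq_abs (c₁ * c₂ - c₃ * c₄)]
    exact pow_le_pow_left₀ (abs_nonneg _) h 2
  have e12 : s₁ ^ 2 * s₂ ^ 2 = (1 - c₁ ^ 2) * (1 - c₂ ^ 2) := by rw [e₁, e₂]
  have e34 : s₃ ^ 2 * s₄ ^ 2 = (1 - c₃ ^ 2) * (1 - c₄ ^ 2) := by rw [e₃, e₄]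
  have e23 : s₂ ^ 2 * s₃ ^ 2 = (1 - c₂ ^ 2) * (1 - c₃ ^ 2) := by rw [e₂, e₃]
  have e14 : s₁ ^ 2 * s₄ ^ 2 = (1 - c₁ ^ 2) * (1 - c₄ ^ 2) := by rw [e₁, e₄]
  have goalsq : (c₂ * c₃ - c₁ * c₄) ^ 2 ≤ (s₂ * s₃ + s₁ * s₄) ^ 2 := by
    nlinarith [hsq, e12, e34, e23, e14]
  have hR : 0 ≤ s₂ * s₃ + s₁ * s₄ := by positivity
  calc |c₂ * c₃ - c₁ * c₄| = Real.sqrt ((c₂ * c₃ - c₁ * c₄) ^ 2) :=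
        (Real.sqrt_sq_eq_abs _).symm
    _ ≤ Real.sqrt ((s₂ * s₃ + s₁ * s₄) ^ 2) := Real.sqrt_le_sqrt goalsq
    _ = s₂ * s₃ + s₁ * s₄ := Real.sqrt_sq hR


/-- In the quantum Bell-CHSH scenario the two-point correlators
satisfy the Tsirelson–Landau–Masanes inequalities. -/
theorem quantum_tlm
    {H : Type*} [NormedAddCommGroup H] [InnerProductSpace ℂ H] [CompleteSpace H]
    (ψ : H) (hψ : ‖ψ‖ = 1)
    (A₀ A₁ B₀ B₁ : H →L[ℂ] H)
    (hA₀ : IsSelfAdjoint A₀) (hA₁ : IsSelfAdjoint A₁)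
    (hB₀ : IsSelfAdjoint B₀) (hB₁ : IsSelfAdjoint B₁)
    (hA₀2 : A₀ * A₀ = 1) (hA₁2 : A₁ * A₁ = 1)
    (hB₀2 : B₀ * B₀ = 1) (hB₁2 : B₁ * B₁ = 1)
    (hcomm : ∀ i ∈ [A₀, A₁], ∀ j ∈ [B₀, B₁], i * j = j * i)
    (c₁ c₂ c₃ c₄ : ℝ)
    (hc₁ : c₁ = (inner ℂ ψ ((A₀ * B₀) ψ) : ℂ).re)
    (hc₂ : c₂ = (inner ℂ ψ ((A₁ * B₀) ψ) : ℂ).re)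
    (hc₃ : c₃ = (inner ℂ ψ ((A₀ * B₁) ψ) : ℂ).re)
    (hc₄ : c₄ = (inner ℂ ψ ((A₁ * B₁) ψ) : ℂ).re) :
    |c₁ * c₂ - c₃ * c₄| ≤
      Real.sqrt (1 - c₁ ^ 2) * Real.sqrt (1 - c₂ ^ 2) +
      Real.sqrt (1 - c₃ ^ 2) * Real.sqrt (1 - c₄ ^ 2) ∧
    |c₁ * c₃ - c₂ * c₄| ≤
      Real.sqrt (1 - c₁ ^ 2) * Real.sqrt (1 - c₃ ^ 2) +
      Real.sqrt (1 - c₂ ^ 2) * Real.sqrt (1 - c₄ ^ 2) ∧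
    |c₂ * c₃ - c₁ * c₄| ≤
      Real.sqrt (1 - c₂ ^ 2) * Real.sqrt (1 - c₃ ^ 2) +
      Real.sqrt (1 - c₁ ^ 2) * Real.sqrt (1 - c₄ ^ 2) := by
  -- self-adjoint move
  have hadj : ∀ (A : H →L[ℂ] H), IsSelfAdjoint A → ∀ x y : H,
      (inner ℂ (A x) y : ℂ) = inner ℂ x (A y) := by
    intro A hA x y
    conv_lhs => rw [← hA.adjoint_eq]
    exact ContinuousLinearMap.adjoint_inner_left A y x
  -- unit norms
  have hnorm : ∀ (A : H →L[ℂ] H), IsSelfAdjoint A → A * A = 1 → ‖A ψ‖ = 1 := by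
    intro A hA h2
    have key : (inner ℂ (A ψ) (A ψ) : ℂ) = inner ℂ ψ ψ := by
      rw [hadj A hA ψ (A ψ), ← ContinuousLinearMap.mul_apply, h2,
        ContinuousLinearMap.one_apply]
    have h1' : ‖A ψ‖ ^ 2 = ‖ψ‖ ^ 2 := by
      rw [← inner_self_eq_norm_sq (𝕜 := ℂ), ← inner_self_eq_norm_sq (𝕜 := ℂ), key]
    rw [hψ] at h1'
    nlinarith [norm_nonneg (A ψ)]
  have hu : ‖A₀ ψ‖ = 1 := hnorm A₀ hA₀ hA₀2
  have hv : ‖A₁ ψ‖ = 1 := hnorm A₁ hA₁ hA₁2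
  have hx : ‖B₀ ψ‖ = 1 := hnorm B₀ hB₀ hB₀2
  have hy : ‖B₁ ψ‖ = 1 := hnorm B₁ hB₁ hB₁2
  -- symmetry of real part
  have resymm : ∀ u x : H, (inner ℂ u x : ℂ).re = (inner ℂ x u : ℂ).re := by
    intro u x
    conv_lhs => rw [← inner_conj_symm]
    exact Complex.conj_re _
  -- correlators as inner ℂ products of unit vectors
  have hc₁' : c₁ = (inner ℂ (A₀ ψ) (B₀ ψ) : ℂ).re := by
    rw [hc₁, ContinuousLinearMap.mul_apply, ← hadj A₀ hA₀]
  have hc₂' : c₂ = (inner ℂ (A₁ ψ) (B₀ ψ) : ℂ).re := by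
    rw [hc₂, ContinuousLinearMap.mul_apply, ← hadj A₁ hA₁]
  have hc₃' : c₃ = (inner ℂ (A₀ ψ) (B₁ ψ) : ℂ).re := by
    rw [hc₃, ContinuousLinearMap.mul_apply, ← hadj A₀ hA₀]
  have hc₄' : c₄ = (inner ℂ (A₁ ψ) (B₁ ψ) : ℂ).re := by
    rw [hc₄, ContinuousLinearMap.mul_apply, ← hadj A₁ hA₁]
  -- bounds
  have hbound : ∀ u x : H, ‖u‖ = 1 → ‖x‖ = 1 → ((inner ℂ u x : ℂ).re) ^ 2 ≤ 1 := by
    intro u x hu hx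
    have h := norm_inner_le_norm (𝕜 := ℂ) u x
    rw [hu, hx, mul_one] at h
    have h2 := Complex.abs_re_le_norm (inner ℂ u x : ℂ)
    nlinarith [sq_abs ((inner ℂ u x : ℂ).re), abs_nonneg ((inner ℂ u x : ℂ).re)]
  have b₁ : c₁ ^ 2 ≤ 1 := by rw [hc₁']; exact hbound _ _ hu hx
  have b₂ : c₂ ^ 2 ≤ 1 := by rw [hc₂']; exact hbound _ _ hv hx
  have b₃ : c₃ ^ 2 ≤ 1 := by rw [hc₃']; exact hbound _ _ hu hy
  have b₄ : c₄ ^ 2 ≤ 1 := by rw [hc₄']; exact hbound _ _ hv hy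
  -- inequality 1 via mediator t = re ⟪A₀ψ, A₁ψ⟫
  have k1 := tlm_key (A₀ ψ) (A₁ ψ) (B₀ ψ) hu hv hx
  have k2 := tlm_key (A₀ ψ) (A₁ ψ) (B₁ ψ) hu hv hy
  rw [← hc₁', ← hc₂'] at k1
  rw [← hc₃', ← hc₄'] at k2
  set t := (inner ℂ (A₀ ψ) (A₁ ψ) : ℂ).re with ht
  have ineq1 : |c₁ * c₂ - c₃ * c₄| ≤
      Real.sqrt (1 - c₁ ^ 2) * Real.sqrt (1 - c₂ ^ 2) +
      Real.sqrt (1 - c₃ ^ 2) * Real.sqrt (1 - c₄ ^ 2) := by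
    have : c₁ * c₂ - c₃ * c₄ = -(t - c₁ * c₂) + (t - c₃ * c₄) := by ring
    rw [this]
    refine le_trans (abs_add_le _ _) ?_
    rw [abs_neg]
    exact add_le_add k1 k2
  -- inequality 2 via mediator s = re ⟪B₀ψ, B₁ψ⟫
  have k3 := tlm_key (B₀ ψ) (B₁ ψ) (A₀ ψ) hx hy hu
  have k4 := tlm_key (B₀ ψ) (B₁ ψ) (A₁ ψ) hx hy hv
  rw [resymm (B₀ ψ) (A₀ ψ), resymm (B₁ ψ) (A₀ ψ), ← hc₁', ← hc₃'] at k3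
  rw [resymm (B₀ ψ) (A₁ ψ), resymm (B₁ ψ) (A₁ ψ), ← hc₂', ← hc₄'] at k4
  set s := (inner ℂ (B₀ ψ) (B₁ ψ) : ℂ).re with hs
  have ineq2 : |c₁ * c₃ - c₂ * c₄| ≤
      Real.sqrt (1 - c₁ ^ 2) * Real.sqrt (1 - c₃ ^ 2) +
      Real.sqrt (1 - c₂ ^ 2) * Real.sqrt (1 - c₄ ^ 2) := by
    have : c₁ * c₃ - c₂ * c₄ = -(s - c₁ * c₃) + (s - c₂ * c₄) := by ring
    rw [this]
    refine le_trans (abs_add_le _ _) ?_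
    rw [abs_neg]
    exact add_le_add k3 k4
  exact ⟨ineq1, ineq2, tlm_swap c₁ c₂ c₃ c₄ b₁ b₂ b₃ b₄ ineq1⟩
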